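/- Let N ≥ 2 be an integer and s ∈ (0,1) with N > 2s. Then the kernel K satisfies: K(t) = K(-t) and K(t) > 0 for every t ≠ 0; moreover there exist constants 0 < c₁ ≤ c₂ such that c₁ |t|^{-(1+2s)} ≤ K(t) ≤ c₂ |t|^{-(1+2s)} for every t with 0 < |t| ≤ 1, and c₁ e^{-|t|(N+2s)/2} ≤ K(t) ≤ c₂ e^{-|t|(N+2s)/2} for every t with |t| ≥ 1. -/

import Mathlib

open MeasureTheory Filter Set Real

/-- The kernel `K(t) = e^{-t(N+2s)/2} ∫_{S^{N-1}} (1 + e^{-2t} - 2e^{-t}⟨θ,σ⟩)^{-(N+2s)/2} dσ`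
appearing after the Emden–Fowler reduction, where the integral is taken over the unit
sphere of `ℝ^N` with its surface measure and `θ` is a fixed unit vector. -/
noncomputable def henonKernel (N : ℕ) (s : ℝ) (θ : EuclideanSpace ℝ (Fin N)) (t : ℝ) : ℝ :=
  Real.exp (-t * ((N : ℝ) + 2 * s) / 2) *
    ∫ σ : Metric.sphere (0 : EuclideanSpace ℝ (Fin N)) 1,
      (1 + Real.exp (-2 * t) - 2 * Real.exp (-t) *
          (inner ℝ θ (σ : EuclideanSpace ℝ (Fin N)) : ℝ)) ^ (-((N : ℝ) + 2 * s) / 2)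
      ∂((volume : Measure (EuclideanSpace ℝ (Fin N))).toSphere)

namespace HenonAux

open Metric

/-- The spherical integral as a function of `r`. -/
noncomputable def sphI (N : ℕ) (s : ℝ) (θ : EuclideanSpace ℝ (Fin N)) (r : ℝ) : ℝ :=
  ∫ σ : Metric.sphere (0 : EuclideanSpace ℝ (Fin N)) 1,
    (1 + r ^ 2 - 2 * r * (inner ℝ θ (σ : EuclideanSpace ℝ (Fin N)) : ℝ)) ^ (-((N : ℝ) + 2 * s) / 2)
    ∂((volume : Measure (EuclideanSpace ℝ (Fin N))).toSphere)

/-- Total mass of the sphere measure. -/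
noncomputable def M (N : ℕ) : ℝ :=
  (((volume : Measure (EuclideanSpace ℝ (Fin N))).toSphere) Set.univ).toReal

lemma kernel_eq (N : ℕ) (s : ℝ) (θ : EuclideanSpace ℝ (Fin N)) (t : ℝ) :
    henonKernel N s θ t
      = Real.exp (-t * ((N : ℝ) + 2 * s) / 2) * sphI N s θ (Real.exp (-t)) := by
  have h : Real.exp (-2 * t) = Real.exp (-t) ^ 2 := by
    rw [sq, ← Real.exp_add]; ring_nf
  unfold henonKernel sphI
  simp only [h]

lemma inner_le_one {N : ℕ} (θ : EuclideanSpace ℝ (Fin N)) (hθ : ‖θ‖ = 1)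
    (σ : Metric.sphere (0 : EuclideanSpace ℝ (Fin N)) 1) :
    |(inner ℝ θ (σ : EuclideanSpace ℝ (Fin N)) : ℝ)| ≤ 1 := by
  have hσ : ‖(σ : EuclideanSpace ℝ (Fin N))‖ = 1 := by
    have := σ.2
    rwa [Metric.mem_sphere, dist_zero_right] at this
  have h := abs_real_inner_le_norm θ (σ : EuclideanSpace ℝ (Fin N))
  rwa [hθ, hσ, one_mul] at h

lemma base_bounds {N : ℕ} (θ : EuclideanSpace ℝ (Fin N)) (hθ : ‖θ‖ = 1) {r : ℝ} (hr0 : 0 ≤ r)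
    (σ : Metric.sphere (0 : EuclideanSpace ℝ (Fin N)) 1) :
    (1 - r) ^ 2 ≤ 1 + r ^ 2 - 2 * r * (inner ℝ θ (σ : EuclideanSpace ℝ (Fin N)) : ℝ) ∧
      1 + r ^ 2 - 2 * r * (inner ℝ θ (σ : EuclideanSpace ℝ (Fin N)) : ℝ) ≤ (1 + r) ^ 2 := by
  have h := abs_le.mp (inner_le_one θ hθ σ)
  constructor <;> nlinarith [h.1, h.2]


lemma M_pos {N : ℕ} (hN : 2 ≤ N) : 0 < M N := by
  unfold M
  haveI : Nontrivial (EuclideanSpace ℝ (Fin N)) := by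
    apply Module.nontrivial_of_finrank_pos (R := ℝ)
    rw [finrank_euclideanSpace_fin]; omega
  rw [Measure.toSphere_apply_univ]
  refine ENNReal.toReal_pos ?_ ?_
  · rw [finrank_euclideanSpace_fin]
    refine mul_ne_zero (by exact_mod_cast (by omega : N ≠ 0)) ?_
    exact (measure_ball_pos volume 0 one_pos).ne'
  · exact ENNReal.mul_ne_top (ENNReal.natCast_ne_top _) measure_ball_lt_top.ne


lemma W_bounds {r : ℝ} (hr0 : 0 < r) (hr1 : r < 1) (n : ℕ) :
    r ^ n * (1 - r) ≤ (∫ y in Set.Ioc r 1, y ^ n) ∧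
      (∫ y in Set.Ioc r 1, y ^ n) ≤ 1 - r := by
  have hint : IntegrableOn (fun y : ℝ => y ^ n) (Set.Ioc r 1) volume :=
    (continuous_pow n).integrableOn_Ioc
  have hconst : ∀ c : ℝ, (∫ _ in Set.Ioc r 1, c) = (1 - r) * c := by
    intro c
    rw [setIntegral_const, Real.volume_real_Ioc, max_eq_left (by linarith), smul_eq_mul]
  constructor
  · calc r ^ n * (1 - r) = ∫ _ in Set.Ioc r 1, r ^ n := by rw [hconst]; ring
      _ ≤ ∫ y in Set.Ioc r 1, y ^ n := by
          refine setIntegral_mono_on (integrableOn_const ?_) hint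
            measurableSet_Ioc fun y hy => pow_le_pow_left₀ hr0.le hy.1.le n
          rw [Real.volume_Ioc]; exact ENNReal.ofReal_ne_top
  · calc (∫ y in Set.Ioc r 1, y ^ n) ≤ ∫ _ in Set.Ioc r 1, (1:ℝ) := by
          refine setIntegral_mono_on hint (integrableOn_const ?_) measurableSet_Ioc
            fun y hy => pow_le_one₀ (by linarith [hy.1]) hy.2
          rw [Real.volume_Ioc]; exact ENNReal.ofReal_ne_top
      _ = 1 - r := by rw [hconst]; ring

lemma sphI_integrand_continuous {N : ℕ} (s : ℝ) (θ : EuclideanSpace ℝ (Fin N)) {r : ℝ}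
    (hpos : ∀ σ : Metric.sphere (0 : EuclideanSpace ℝ (Fin N)) 1,
      (0:ℝ) < 1 + r ^ 2 - 2 * r * (inner ℝ θ (σ : EuclideanSpace ℝ (Fin N)) : ℝ)) :
    Continuous fun σ : Metric.sphere (0 : EuclideanSpace ℝ (Fin N)) 1 =>
      (1 + r ^ 2 - 2 * r * (inner ℝ θ (σ : EuclideanSpace ℝ (Fin N)) : ℝ))
        ^ (-((N : ℝ) + 2 * s) / 2) := by
  have hbase : Continuous fun σ : Metric.sphere (0 : EuclideanSpace ℝ (Fin N)) 1 =>
      1 + r ^ 2 - 2 * r * (inner ℝ θ (σ : EuclideanSpace ℝ (Fin N)) : ℝ) := by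
    have : Continuous fun σ : Metric.sphere (0 : EuclideanSpace ℝ (Fin N)) 1 =>
        (inner ℝ θ (σ : EuclideanSpace ℝ (Fin N)) : ℝ) :=
      Continuous.inner continuous_const continuous_subtype_val
    fun_prop
  exact hbase.rpow_const fun σ => Or.inl (hpos σ).ne'

lemma sphI_bounds {N : ℕ} (hN : 2 ≤ N) {s : ℝ} (hs0 : 0 < s)
    (θ : EuclideanSpace ℝ (Fin N)) (hθ : ‖θ‖ = 1) {r : ℝ} (hr0 : 0 ≤ r) (hr1 : r < 1) :
    ((1 + r) ^ 2) ^ (-((N : ℝ) + 2 * s) / 2) * M N ≤ sphI N s θ r ∧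
      sphI N s θ r ≤ ((1 - r) ^ 2) ^ (-((N : ℝ) + 2 * s) / 2) * M N := by
  have hexp : -((N : ℝ) + 2 * s) / 2 ≤ 0 := by
    have : (0:ℝ) ≤ N := Nat.cast_nonneg N
    nlinarith
  have h1r : (0:ℝ) < (1 - r) ^ 2 := by
    have h : (0:ℝ) < 1 - r := by linarith
    positivity
  have hpos : ∀ σ : Metric.sphere (0 : EuclideanSpace ℝ (Fin N)) 1,
      (0:ℝ) < 1 + r ^ 2 - 2 * r * (inner ℝ θ (σ : EuclideanSpace ℝ (Fin N)) : ℝ) :=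
    fun σ => lt_of_lt_of_le h1r (base_bounds θ hθ hr0 σ).1
  have hcont := sphI_integrand_continuous (N := N) s θ hpos
  -- pointwise bounds on the integrand
  have hup : ∀ σ : Metric.sphere (0 : EuclideanSpace ℝ (Fin N)) 1,
      (1 + r ^ 2 - 2 * r * (inner ℝ θ (σ : EuclideanSpace ℝ (Fin N)) : ℝ))
        ^ (-((N : ℝ) + 2 * s) / 2) ≤ ((1 - r) ^ 2) ^ (-((N : ℝ) + 2 * s) / 2) :=
    fun σ => Real.rpow_le_rpow_of_nonpos h1r (base_bounds θ hθ hr0 σ).1 hexp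
  have hlo : ∀ σ : Metric.sphere (0 : EuclideanSpace ℝ (Fin N)) 1,
      ((1 + r) ^ 2) ^ (-((N : ℝ) + 2 * s) / 2) ≤
      (1 + r ^ 2 - 2 * r * (inner ℝ θ (σ : EuclideanSpace ℝ (Fin N)) : ℝ))
        ^ (-((N : ℝ) + 2 * s) / 2) :=
    fun σ => Real.rpow_le_rpow_of_nonpos (hpos σ) (base_bounds θ hθ hr0 σ).2 hexp
  have hint : Integrable (fun σ : Metric.sphere (0 : EuclideanSpace ℝ (Fin N)) 1 =>
      (1 + r ^ 2 - 2 * r * (inner ℝ θ (σ : EuclideanSpace ℝ (Fin N)) : ℝ))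
        ^ (-((N : ℝ) + 2 * s) / 2))
      ((volume : Measure (EuclideanSpace ℝ (Fin N))).toSphere) := by
    refine Integrable.mono' (integrable_const (((1 - r) ^ 2) ^ (-((N : ℝ) + 2 * s) / 2)))
      hcont.aestronglyMeasurable ?_
    filter_upwards with σ
    rw [Real.norm_eq_abs, abs_of_nonneg (Real.rpow_nonneg (hpos σ).le _)]
    exact hup σ
  constructor
  · calc ((1 + r) ^ 2) ^ (-((N : ℝ) + 2 * s) / 2) * M N
        = ∫ _σ : Metric.sphere (0 : EuclideanSpace ℝ (Fin N)) 1,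
            ((1 + r) ^ 2) ^ (-((N : ℝ) + 2 * s) / 2)
            ∂((volume : Measure (EuclideanSpace ℝ (Fin N))).toSphere) := by
          rw [integral_const, measureReal_def, M, smul_eq_mul, mul_comm]
      _ ≤ sphI N s θ r := integral_mono (integrable_const _) hint hlo
  · calc sphI N s θ r
        ≤ ∫ _σ : Metric.sphere (0 : EuclideanSpace ℝ (Fin N)) 1,
            ((1 - r) ^ 2) ^ (-((N : ℝ) + 2 * s) / 2)
            ∂((volume : Measure (EuclideanSpace ℝ (Fin N))).toSphere) :=
          integral_mono hint (integrable_const _) hup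
      _ = ((1 - r) ^ 2) ^ (-((N : ℝ) + 2 * s) / 2) * M N := by
          rw [integral_const, measureReal_def, M, smul_eq_mul, mul_comm]

lemma sphI_nonneg {N : ℕ} {s : ℝ} (θ : EuclideanSpace ℝ (Fin N)) (hθ : ‖θ‖ = 1) {r : ℝ}
    (hr0 : 0 ≤ r) : 0 ≤ sphI N s θ r := by
  refine integral_nonneg fun σ => Real.rpow_nonneg ?_ _
  have := (base_bounds θ hθ hr0 σ).1
  nlinarith [sq_nonneg (1 - r)]

lemma sphI_neg {N : ℕ} {s : ℝ} (θ : EuclideanSpace ℝ (Fin N)) (hθ : ‖θ‖ = 1) (t : ℝ) :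
    sphI N s θ (Real.exp t)
      = Real.exp (t * (-((N : ℝ) + 2 * s))) * sphI N s θ (Real.exp (-t)) := by
  unfold sphI
  rw [← integral_const_mul]
  refine integral_congr_ae (Filter.Eventually.of_forall fun σ => ?_)
  dsimp only
  set c : ℝ := (inner ℝ θ (σ : EuclideanSpace ℝ (Fin N)) : ℝ) with hc
  have hbase : (0:ℝ) ≤ 1 + Real.exp (-t) ^ 2 - 2 * Real.exp (-t) * c := by
    have := (base_bounds θ hθ (Real.exp_pos (-t)).le σ).1
    nlinarith [sq_nonneg (1 - Real.exp (-t))]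
  have key : 1 + Real.exp t ^ 2 - 2 * Real.exp t * c
      = Real.exp t ^ 2 * (1 + Real.exp (-t) ^ 2 - 2 * Real.exp (-t) * c) := by
    rw [Real.exp_neg]
    field_simp
    ring
  rw [key, Real.mul_rpow (sq_nonneg _) hbase]
  congr 1
  rw [← Real.rpow_natCast (Real.exp t) 2, ← Real.rpow_mul (Real.exp_pos t).le,
    Real.rpow_def_of_pos (Real.exp_pos t), Real.log_exp]
  congr 1
  push_cast
  ring

lemma ioiPow_indicator (n : ℕ) {r : ℝ} (hr : 0 < r) :
    (∫ ρ : Set.Ioi (0 : ℝ), (Set.Ioc r 1).indicator (fun _ => (1 : ℝ)) ρ.1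
      ∂(MeasureTheory.Measure.volumeIoiPow n))
      = ∫ y in Set.Ioc r 1, y ^ n := by
  rw [Measure.volumeIoiPow]
  simp only [ENNReal.ofReal]
  rw [integral_withDensity_eq_integral_smul
      ((measurable_subtype_coe.pow_const _).real_toNNReal)
      (fun ρ : Set.Ioi (0:ℝ) => (Set.Ioc r 1).indicator (fun _ => (1 : ℝ)) ρ.1)]
  rw [integral_subtype_comap measurableSet_Ioi
      (fun y : ℝ => Real.toNNReal (y ^ n) • (Set.Ioc r 1).indicator (fun _ => (1 : ℝ)) y)]
  rw [setIntegral_congr_fun measurableSet_Ioi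
      (g := (Set.Ioc r 1).indicator (fun y : ℝ => y ^ n))
      (fun y hy => by
        by_cases hmem : y ∈ Set.Ioc r 1 <;>
          simp [hmem, NNReal.smul_def, Real.coe_toNNReal _ (pow_nonneg (le_of_lt hy.out) n)])]
  rw [integral_indicator measurableSet_Ioc, Measure.restrict_restrict measurableSet_Ioc,
    show Set.Ioc r 1 ∩ Set.Ioi 0 = Set.Ioc r 1 from
      Set.inter_eq_left.mpr (fun y hy => lt_trans hr hy.1)]

lemma polar_eq {N : ℕ} (hN : 2 ≤ N) (s : ℝ) (θ : EuclideanSpace ℝ (Fin N)) {r : ℝ}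
    (hr0 : 0 < r) :
    (∫ x : EuclideanSpace ℝ (Fin N),
        (Set.Ioc r 1).indicator (fun _ => (1 : ℝ)) ‖x‖ *
          (1 + r ^ 2 - 2 * r * (‖x‖⁻¹ * (inner ℝ θ x : ℝ))) ^ (-((N : ℝ) + 2 * s) / 2))
      = sphI N s θ r * ∫ y in Set.Ioc r 1, y ^ (N - 1) := by
  haveI : Nontrivial (EuclideanSpace ℝ (Fin N)) := by
    apply Module.nontrivial_of_finrank_pos (R := ℝ)
    rw [finrank_euclideanSpace_fin]; omega
  set f : EuclideanSpace ℝ (Fin N) → ℝ := fun x =>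
    (Set.Ioc r 1).indicator (fun _ => (1 : ℝ)) ‖x‖ *
      (1 + r ^ 2 - 2 * r * (‖x‖⁻¹ * (inner ℝ θ x : ℝ))) ^ (-((N : ℝ) + 2 * s) / 2) with hf
  set g : Metric.sphere (0 : EuclideanSpace ℝ (Fin N)) 1 × Set.Ioi (0:ℝ) → ℝ := fun p =>
    (1 + r ^ 2 - 2 * r * (inner ℝ θ (p.1 : EuclideanSpace ℝ (Fin N)) : ℝ))
        ^ (-((N : ℝ) + 2 * s) / 2) *
      (Set.Ioc r 1).indicator (fun _ => (1 : ℝ)) p.2.1 with hg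
  have key := (Measure.measurePreserving_homeomorphUnitSphereProd
      (volume : Measure (EuclideanSpace ℝ (Fin N)))).integral_comp
      (Homeomorph.measurableEmbedding _) g
  have hdim : Module.finrank ℝ (EuclideanSpace ℝ (Fin N)) - 1 = N - 1 := by
    rw [finrank_euclideanSpace_fin]
  rw [hdim] at key
  have h1 : (∫ x : EuclideanSpace ℝ (Fin N), f x)
      = ∫ x in ({0}ᶜ : Set (EuclideanSpace ℝ (Fin N))), f x := by
    rw [restrict_compl_singleton]
  have h2 : (∫ x in ({0}ᶜ : Set (EuclideanSpace ℝ (Fin N))), f x)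
      = ∫ x : ({0}ᶜ : Set (EuclideanSpace ℝ (Fin N))), f x.1
          ∂(Measure.comap Subtype.val volume) :=
    (integral_subtype_comap (measurableSet_singleton 0).compl f).symm
  have h3 : (∫ x : ({0}ᶜ : Set (EuclideanSpace ℝ (Fin N))), f x.1
          ∂(Measure.comap Subtype.val volume))
      = ∫ x : ({0}ᶜ : Set (EuclideanSpace ℝ (Fin N))),
          g (homeomorphUnitSphereProd (EuclideanSpace ℝ (Fin N)) x)
          ∂(Measure.comap Subtype.val volume) := by
    refine integral_congr_ae (Filter.Eventually.of_forall fun x => ?_)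
    simp only [hf, hg, homeomorphUnitSphereProd_apply_fst_coe,
      homeomorphUnitSphereProd_apply_snd_coe, real_inner_smul_right]
    ring
  have h4 : (∫ p : Metric.sphere (0 : EuclideanSpace ℝ (Fin N)) 1 × Set.Ioi (0:ℝ), g p
        ∂((((volume : Measure (EuclideanSpace ℝ (Fin N)))).toSphere).prod
          (Measure.volumeIoiPow (N - 1))))
      = sphI N s θ r * ∫ y in Set.Ioc r 1, y ^ (N - 1) := by
    rw [hg]
    rw [integral_prod_mul (μ := ((volume : Measure (EuclideanSpace ℝ (Fin N)))).toSphere)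
        (ν := Measure.volumeIoiPow (N - 1))
        (fun σ : Metric.sphere (0 : EuclideanSpace ℝ (Fin N)) 1 =>
          (1 + r ^ 2 - 2 * r * (inner ℝ θ (σ : EuclideanSpace ℝ (Fin N)) : ℝ))
            ^ (-((N : ℝ) + 2 * s) / 2))
        (fun ρ : Set.Ioi (0:ℝ) => (Set.Ioc r 1).indicator (fun _ => (1 : ℝ)) ρ.1)]
    rw [ioiPow_indicator (N - 1) hr0]
    rfl
  rw [show (∫ x : EuclideanSpace ℝ (Fin N),
        (Set.Ioc r 1).indicator (fun _ => (1 : ℝ)) ‖x‖ *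
          (1 + r ^ 2 - 2 * r * (‖x‖⁻¹ * (inner ℝ θ x : ℝ))) ^ (-((N : ℝ) + 2 * s) / 2))
      = ∫ x : EuclideanSpace ℝ (Fin N), f x from rfl, h1, h2, h3, key, h4]

noncomputable def CN (N : ℕ) (s : ℝ) : ℝ :=
  ∫ x : EuclideanSpace ℝ (Fin N), (1 + ‖x‖) ^ (-((N : ℝ) + 2 * s))

lemma CN_integrable {N : ℕ} {s : ℝ} (hs0 : 0 < s) :
    Integrable (fun x : EuclideanSpace ℝ (Fin N) => (1 + ‖x‖) ^ (-((N : ℝ) + 2 * s))) := by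
  apply integrable_one_add_norm
  rw [finrank_euclideanSpace_fin]
  linarith

lemma CN_nonneg (N : ℕ) (s : ℝ) : 0 ≤ CN N s :=
  integral_nonneg fun x => Real.rpow_nonneg (by positivity) _

lemma shift_scale_eq {ε : ℝ} (hε : 0 < ε) (τ : ℝ) (θ x : EuclideanSpace ℝ (Fin N)) :
    (ε + ‖x - θ‖) ^ (-τ)
      = ε ^ (-τ) * (1 + ‖ε⁻¹ • (x - θ)‖) ^ (-τ) := by
  have h : ε + ‖x - θ‖ = ε * (1 + ‖ε⁻¹ • (x - θ)‖) := by
    rw [norm_smul, Real.norm_eq_abs, abs_of_pos (inv_pos.mpr hε)]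
    field_simp
  rw [h, Real.mul_rpow hε.le (by positivity)]

lemma intE_integrable {N : ℕ} {s : ℝ} (hs0 : 0 < s) {ε : ℝ} (hε : 0 < ε)
    (θ : EuclideanSpace ℝ (Fin N)) :
    Integrable (fun x : EuclideanSpace ℝ (Fin N) =>
      (ε + ‖x - θ‖) ^ (-((N : ℝ) + 2 * s))) := by
  have h1 : Integrable (fun x : EuclideanSpace ℝ (Fin N) =>
      (1 + ‖ε⁻¹ • x‖) ^ (-((N : ℝ) + 2 * s))) :=
    (integrable_comp_smul_iff volume
      (fun x : EuclideanSpace ℝ (Fin N) => (1 + ‖x‖) ^ (-((N : ℝ) + 2 * s)))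
      (inv_ne_zero hε.ne')).2 (CN_integrable hs0)
  have h2 := (h1.comp_add_right (-θ)).const_mul (ε ^ (-((N : ℝ) + 2 * s)))
  refine h2.congr (Filter.Eventually.of_forall fun x => ?_)
  dsimp only
  rw [← sub_eq_add_neg, ← shift_scale_eq hε]

lemma intE_eq {N : ℕ} {s : ℝ} (hs0 : 0 < s) {ε : ℝ} (hε : 0 < ε)
    (θ : EuclideanSpace ℝ (Fin N)) :
    (∫ x : EuclideanSpace ℝ (Fin N), (ε + ‖x - θ‖) ^ (-((N : ℝ) + 2 * s)))
      = ε ^ (-(2 * s)) * CN N s := by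
  have hstep : ∀ x : EuclideanSpace ℝ (Fin N),
      (ε + ‖x - θ‖) ^ (-((N : ℝ) + 2 * s))
        = ε ^ (-((N : ℝ) + 2 * s)) * (1 + ‖ε⁻¹ • (x - θ)‖) ^ (-((N : ℝ) + 2 * s)) :=
    fun x => shift_scale_eq hε _ θ x
  calc (∫ x : EuclideanSpace ℝ (Fin N), (ε + ‖x - θ‖) ^ (-((N : ℝ) + 2 * s)))
      = ε ^ (-((N : ℝ) + 2 * s)) *
          ∫ x : EuclideanSpace ℝ (Fin N), (1 + ‖ε⁻¹ • (x - θ)‖) ^ (-((N : ℝ) + 2 * s)) := by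
        rw [← integral_const_mul]
        exact integral_congr_ae (Filter.Eventually.of_forall fun x => hstep x)
    _ = ε ^ (-((N : ℝ) + 2 * s)) *
          ∫ x : EuclideanSpace ℝ (Fin N), (1 + ‖ε⁻¹ • x‖) ^ (-((N : ℝ) + 2 * s)) := by
        congr 1
        have := integral_add_right_eq_self (μ := (volume : Measure (EuclideanSpace ℝ (Fin N))))
          (fun x : EuclideanSpace ℝ (Fin N) => (1 + ‖ε⁻¹ • x‖) ^ (-((N : ℝ) + 2 * s))) (-θ)
        simp only [← sub_eq_add_neg, smul_sub] at this ⊢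
        exact this
    _ = ε ^ (-((N : ℝ) + 2 * s)) * (ε ^ (N : ℕ) * CN N s) := by
        congr 1
        have := Measure.integral_comp_smul (volume : Measure (EuclideanSpace ℝ (Fin N)))
          (fun x : EuclideanSpace ℝ (Fin N) => (1 + ‖x‖) ^ (-((N : ℝ) + 2 * s))) ε⁻¹
        rw [this, finrank_euclideanSpace_fin, smul_eq_mul, ← inv_pow, inv_inv,
          abs_of_pos (pow_pos hε N)]
        rfl
    _ = ε ^ (-(2 * s)) * CN N s := by
        rw [← Real.rpow_natCast ε N, ← mul_assoc, ← Real.rpow_add hε]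
        congr 2
        ring

lemma annulus_facts {N : ℕ} (θ : EuclideanSpace ℝ (Fin N)) (hθ : ‖θ‖ = 1) {r : ℝ}
    (hr0 : 0 < r) (hr1 : r < 1) {x : EuclideanSpace ℝ (Fin N)} (hx : ‖x‖ ∈ Set.Ioc r 1) :
    (r / 8) * ((1 - r) + ‖x - θ‖) ^ 2 ≤ 1 + r ^ 2 - 2 * r * (‖x‖⁻¹ * (inner ℝ θ x : ℝ)) ∧
      1 + r ^ 2 - 2 * r * (‖x‖⁻¹ * (inner ℝ θ x : ℝ)) ≤ 4 * ((1 - r) + ‖x - θ‖) ^ 2 ∧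
      (1 - r) ^ 2 ≤ 1 + r ^ 2 - 2 * r * (‖x‖⁻¹ * (inner ℝ θ x : ℝ)) := by
  obtain ⟨hu1, hu2⟩ := hx
  have upos : (0:ℝ) < ‖x‖ := lt_trans hr0 hu1
  set u := ‖x‖ with hu
  set y : EuclideanSpace ℝ (Fin N) := u⁻¹ • x with hy
  have hyn : ‖y‖ = 1 := by
    rw [hy, norm_smul, Real.norm_eq_abs, abs_of_pos (inv_pos.mpr upos), ← hu,
      inv_mul_cancel₀ upos.ne']
  have hinner : (inner ℝ θ y : ℝ) = ‖x‖⁻¹ * (inner ℝ θ x : ℝ) := real_inner_smul_right θ x u⁻¹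
  have hdy : ‖θ - y‖ ^ 2 = 2 - 2 * (inner ℝ θ y : ℝ) := by
    rw [norm_sub_sq_real, hθ, hyn]; ring
  have hxy : ‖x - y‖ = 1 - u := by
    have h1 : x - y = (1 - u⁻¹) • x := by
      rw [hy]; module
    rw [h1, norm_smul, Real.norm_eq_abs, ← hu,
      abs_of_nonpos (by simp only [sub_nonpos]; exact one_le_inv_iff₀.mpr ⟨upos, hu2⟩)]
    field_simp
    ring
  have htri1 : ‖θ - y‖ ≤ ‖θ - x‖ + ‖x - y‖ := by
    have := dist_triangle θ x y
    simpa [dist_eq_norm] using this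
  have htri2 : ‖θ - x‖ ≤ ‖θ - y‖ + ‖y - x‖ := by
    have := dist_triangle θ y x
    simpa [dist_eq_norm] using this
  have hyx : ‖y - x‖ = 1 - u := by rw [norm_sub_rev, hxy]
  have hrev : ‖θ - x‖ = ‖x - θ‖ := norm_sub_rev θ x
  set dy := ‖θ - y‖ with hdyd
  set d := ‖x - θ‖ with hdd
  have hdy0 : 0 ≤ dy := norm_nonneg _
  have hd0 : 0 ≤ d := norm_nonneg _
  have hB : 1 + r ^ 2 - 2 * r * (‖x‖⁻¹ * (inner ℝ θ x : ℝ)) = (1 - r) ^ 2 + r * dy ^ 2 := by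
    rw [← hinner, hdyd, hdy]; ring
  have hdy_le : dy ≤ d + (1 - r) := by
    rw [hrev] at htri1
    rw [hxy] at htri1
    have : (1:ℝ) - u ≤ 1 - r := by linarith
    linarith
  have hd_le : d ≤ dy + (1 - r) := by
    rw [hrev] at htri2
    rw [hyx] at htri2
    have : (1:ℝ) - u ≤ 1 - r := by linarith
    linarith
  have hε0 : (0:ℝ) < 1 - r := by linarith
  clear_value u y dy d
  rw [hu, hB]
  clear hy hxy hyx htri1 htri2 hdy hinner hyn hdyd hdd hrev hB hu hu1 hu2 upos
  clear u y x θ hθ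
  refine ⟨?_, ?_, ?_⟩
  · have hAB : 1 - r + d ≤ 2 * (1 - r) + dy := by linarith
    have h1 : (1 - r + d) ^ 2 ≤ (2 * (1 - r) + dy) ^ 2 :=
      pow_le_pow_left₀ (by linarith) hAB 2
    have h2 : (2 * (1 - r) + dy) ^ 2 ≤ 8 * ((1 - r) ^ 2 + dy ^ 2) := by
      nlinarith [sq_nonneg (2 * (1 - r) - dy), sq_nonneg dy]
    have h3 : r / 8 * (1 - r + d) ^ 2 ≤ r / 8 * (8 * ((1 - r) ^ 2 + dy ^ 2)) :=
      mul_le_mul_of_nonneg_left (h1.trans h2) (by positivity)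
    nlinarith [h3, mul_nonneg (sq_nonneg (1 - r)) (by linarith : (0:ℝ) ≤ 1 - r)]
  · have hdy2 : dy ^ 2 ≤ (d + (1 - r)) ^ 2 := pow_le_pow_left₀ hdy0 hdy_le 2
    have h5 : r * dy ^ 2 ≤ dy ^ 2 := by nlinarith [sq_nonneg dy]
    nlinarith [hdy2, h5, mul_nonneg hε0.le hd0, sq_nonneg d]
  · nlinarith [mul_nonneg hr0.le (sq_nonneg dy)]

lemma sq_rpow {a : ℝ} (ha : 0 ≤ a) (τ : ℝ) : (a ^ 2) ^ (-τ / 2) = a ^ (-τ) := by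
  rw [← Real.rpow_natCast a 2, ← Real.rpow_mul ha]
  congr 1
  push_cast
  ring

lemma base_nonneg_all {N : ℕ} (θ : EuclideanSpace ℝ (Fin N)) (hθ : ‖θ‖ = 1) {r : ℝ}
    (hr0 : 0 ≤ r) (x : EuclideanSpace ℝ (Fin N)) :
    0 ≤ 1 + r ^ 2 - 2 * r * (‖x‖⁻¹ * (inner ℝ θ x : ℝ)) := by
  have habs : |‖x‖⁻¹ * (inner ℝ θ x : ℝ)| ≤ 1 := by
    rcases eq_or_ne x 0 with h | h
    · simp [h]
    · have hx : (0:ℝ) < ‖x‖ := norm_pos_iff.mpr h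
      rw [abs_mul, abs_of_pos (inv_pos.mpr hx)]
      have h2 : |(inner ℝ θ x : ℝ)| ≤ ‖x‖ := by
        have := abs_real_inner_le_norm θ x
        rwa [hθ, one_mul] at this
      calc ‖x‖⁻¹ * |(inner ℝ θ x : ℝ)| ≤ ‖x‖⁻¹ * ‖x‖ :=
            mul_le_mul_of_nonneg_left h2 (inv_pos.mpr hx).le
        _ = 1 := inv_mul_cancel₀ hx.ne'
  have h := abs_le.mp habs
  nlinarith [mul_le_mul_of_nonneg_left h.2 hr0, sq_nonneg (1 - r)]

lemma pt_upper {N : ℕ} {s : ℝ} (hs0 : 0 < s) (θ : EuclideanSpace ℝ (Fin N)) (hθ : ‖θ‖ = 1)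
    {r : ℝ} (hre : Real.exp (-1) ≤ r) (hr1 : r < 1) (x : EuclideanSpace ℝ (Fin N)) :
    (Set.Ioc r 1).indicator (fun _ => (1 : ℝ)) ‖x‖ *
        (1 + r ^ 2 - 2 * r * (‖x‖⁻¹ * (inner ℝ θ x : ℝ))) ^ (-((N : ℝ) + 2 * s) / 2)
      ≤ (8 * Real.exp 1) ^ (((N : ℝ) + 2 * s) / 2) * ((1 - r) + ‖x - θ‖) ^ (-((N : ℝ) + 2 * s)) := by
  have hr0 : 0 < r := lt_of_lt_of_le (Real.exp_pos _) hre
  have hε0 : (0:ℝ) < 1 - r := by linarith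
  have hεd : (0:ℝ) < (1 - r) + ‖x - θ‖ := by
    have := norm_nonneg (x - θ); linarith
  have hexp : -((N : ℝ) + 2 * s) / 2 ≤ 0 := by
    have : (0:ℝ) ≤ N := Nat.cast_nonneg N
    nlinarith
  by_cases hx : ‖x‖ ∈ Set.Ioc r 1
  · obtain ⟨hlow, hup2, hB2⟩ := annulus_facts θ hθ hr0 hr1 hx
    rw [Set.indicator_of_mem hx, one_mul]
    calc (1 + r ^ 2 - 2 * r * (‖x‖⁻¹ * (inner ℝ θ x : ℝ))) ^ (-((N : ℝ) + 2 * s) / 2)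
        ≤ ((r / 8) * ((1 - r) + ‖x - θ‖) ^ 2) ^ (-((N : ℝ) + 2 * s) / 2) :=
          Real.rpow_le_rpow_of_nonpos (by positivity : (0:ℝ) < (r / 8) * ((1 - r) + ‖x - θ‖) ^ 2) hlow hexp
      _ = (r / 8) ^ (-((N : ℝ) + 2 * s) / 2) * (((1 - r) + ‖x - θ‖) ^ 2) ^ (-((N : ℝ) + 2 * s) / 2) :=
          Real.mul_rpow (by positivity) (sq_nonneg _)
      _ = (r / 8) ^ (-((N : ℝ) + 2 * s) / 2) * ((1 - r) + ‖x - θ‖) ^ (-((N : ℝ) + 2 * s)) := by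
          rw [sq_rpow hεd.le]
      _ ≤ (8 * Real.exp 1) ^ (((N : ℝ) + 2 * s) / 2) * ((1 - r) + ‖x - θ‖) ^ (-((N : ℝ) + 2 * s)) := by
          refine mul_le_mul_of_nonneg_right ?_ (Real.rpow_nonneg hεd.le _)
          rw [show -((N : ℝ) + 2 * s) / 2 = -(((N : ℝ) + 2 * s) / 2) by ring,
            Real.rpow_neg (by positivity), ← Real.inv_rpow (by positivity), inv_div]
          refine Real.rpow_le_rpow (by positivity) ?_ (by positivity)
          rw [div_le_iff₀ hr0]
          have h1 : (8 * Real.exp 1) * Real.exp (-1) = 8 := by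
            rw [Real.exp_neg 1, mul_assoc, mul_inv_cancel₀ (Real.exp_ne_zero 1), mul_one]
          nlinarith [mul_le_mul_of_nonneg_left hre (by positivity : (0:ℝ) ≤ 8 * Real.exp 1)]
  · rw [Set.indicator_of_notMem hx, zero_mul]
    exact mul_nonneg (Real.rpow_nonneg (by positivity) _) (Real.rpow_nonneg hεd.le _)

set_option maxHeartbeats 1000000 in
lemma near_bounds {N : ℕ} (hN : 2 ≤ N) {s : ℝ} (hs0 : 0 < s) (hNs : 2 * s < (N : ℝ))
    (θ : EuclideanSpace ℝ (Fin N)) (hθ : ‖θ‖ = 1) :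
    ∃ C₁ C₂ : ℝ, 0 < C₁ ∧ 0 < C₂ ∧ ∀ r : ℝ, Real.exp (-1) ≤ r → r < 1 →
      C₁ * (1 - r) ^ (-(1 + 2 * s)) ≤ sphI N s θ r ∧
        sphI N s θ r ≤ C₂ * (1 - r) ^ (-(1 + 2 * s)) := by
  have hNr : (0:ℝ) < (N:ℝ) := by exact_mod_cast (by omega : 0 < N)
  set vN := (volume (Metric.ball (0 : EuclideanSpace ℝ (Fin N)) 1)).toReal with hv
  have hvpos : 0 < vN :=
    ENNReal.toReal_pos (measure_ball_pos _ _ one_pos).ne' measure_ball_lt_top.ne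
  set Cq : ℝ := (8 * Real.exp 1) ^ (((N : ℝ) + 2 * s) / 2) with hCqdef
  have hCq0 : 0 < Cq := Real.rpow_pos_of_pos (by positivity) _
  have hCN0 : 0 ≤ CN N s := CN_nonneg N s
  clear_value vN
  refine ⟨(4:ℝ) ^ (-((N : ℝ) + 2 * s)) * (4:ℝ)⁻¹ ^ (N : ℕ) * vN,
    (Cq * CN N s + 1) * Real.exp 1 ^ (N - 1 : ℕ), by positivity, by positivity,
    fun r hre hr1 => ?_⟩
  have hr0 : 0 < r := lt_of_lt_of_le (Real.exp_pos _) hre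
  have hε0 : (0:ℝ) < 1 - r := by linarith
  have hexp : -((N : ℝ) + 2 * s) / 2 ≤ 0 := by nlinarith
  -- measurability and nonnegativity of the integrand
  have hm1 : Measurable fun x : EuclideanSpace ℝ (Fin N) => (inner ℝ θ x : ℝ) :=
    (Continuous.inner continuous_const continuous_id).measurable
  have hmB : Measurable fun x : EuclideanSpace ℝ (Fin N) =>
      (1 + r ^ 2 - 2 * r * (‖x‖⁻¹ * (inner ℝ θ x : ℝ))) ^ (-((N : ℝ) + 2 * s) / 2) := by
    fun_prop
  have hmf : Measurable fun x : EuclideanSpace ℝ (Fin N) =>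
      (Set.Ioc r 1).indicator (fun _ => (1 : ℝ)) ‖x‖ *
        (1 + r ^ 2 - 2 * r * (‖x‖⁻¹ * (inner ℝ θ x : ℝ))) ^ (-((N : ℝ) + 2 * s) / 2) :=
    ((measurable_const.indicator measurableSet_Ioc).comp measurable_norm).mul hmB
  have hf0 : ∀ x : EuclideanSpace ℝ (Fin N),
      0 ≤ (Set.Ioc r 1).indicator (fun _ => (1 : ℝ)) ‖x‖ *
        (1 + r ^ 2 - 2 * r * (‖x‖⁻¹ * (inner ℝ θ x : ℝ))) ^ (-((N : ℝ) + 2 * s) / 2) :=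
    fun x => mul_nonneg (Set.indicator_nonneg (fun _ _ => zero_le_one) _)
      (Real.rpow_nonneg (base_nonneg_all θ hθ hr0.le x) _)
  have hint2 := intE_integrable hs0 hε0 θ
  have hfInt : Integrable (fun x : EuclideanSpace ℝ (Fin N) =>
      (Set.Ioc r 1).indicator (fun _ => (1 : ℝ)) ‖x‖ *
        (1 + r ^ 2 - 2 * r * (‖x‖⁻¹ * (inner ℝ θ x : ℝ))) ^ (-((N : ℝ) + 2 * s) / 2)) := by
    refine Integrable.mono' (hint2.const_mul Cq) hmf.aestronglyMeasurable
      (Filter.Eventually.of_forall fun x => ?_)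
    rw [Real.norm_eq_abs, abs_of_nonneg (hf0 x)]
    exact pt_upper hs0 θ hθ hre hr1 x
  -- upper bound on A
  have hup : (∫ x : EuclideanSpace ℝ (Fin N),
      (Set.Ioc r 1).indicator (fun _ => (1 : ℝ)) ‖x‖ *
        (1 + r ^ 2 - 2 * r * (‖x‖⁻¹ * (inner ℝ θ x : ℝ))) ^ (-((N : ℝ) + 2 * s) / 2))
      ≤ Cq * ((1 - r) ^ (-(2 * s)) * CN N s) := by
    calc (∫ x : EuclideanSpace ℝ (Fin N),
        (Set.Ioc r 1).indicator (fun _ => (1 : ℝ)) ‖x‖ *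
          (1 + r ^ 2 - 2 * r * (‖x‖⁻¹ * (inner ℝ θ x : ℝ))) ^ (-((N : ℝ) + 2 * s) / 2))
        ≤ ∫ x : EuclideanSpace ℝ (Fin N), Cq * ((1 - r) + ‖x - θ‖) ^ (-((N : ℝ) + 2 * s)) :=
          integral_mono hfInt (hint2.const_mul Cq) (fun x => pt_upper hs0 θ hθ hre hr1 x)
      _ = Cq * ((1 - r) ^ (-(2 * s)) * CN N s) := by
          rw [integral_const_mul, intE_eq hs0 hε0 θ]
  -- lower bound on A
  set z₀ : EuclideanSpace ℝ (Fin N) := (1 - (1 - r) / 2) • θ with hz₀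
  have hz₀n : ‖z₀‖ = 1 - (1 - r) / 2 := by
    rw [hz₀, norm_smul, Real.norm_eq_abs, hθ, mul_one, abs_of_pos (by linarith)]
  have hz₀θ : ‖z₀ - θ‖ = (1 - r) / 2 := by
    have h1 : z₀ - θ = (-((1 - r) / 2)) • θ := by rw [hz₀]; module
    rw [h1, norm_smul, Real.norm_eq_abs, hθ, mul_one, abs_neg, abs_of_pos (by linarith)]
  have hptlow : ∀ x : EuclideanSpace ℝ (Fin N),
      (Metric.closedBall z₀ ((1 - r) / 4)).indicator
          (fun _ => (4 * (1 - r)) ^ (-((N : ℝ) + 2 * s))) x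
        ≤ (Set.Ioc r 1).indicator (fun _ => (1 : ℝ)) ‖x‖ *
          (1 + r ^ 2 - 2 * r * (‖x‖⁻¹ * (inner ℝ θ x : ℝ))) ^ (-((N : ℝ) + 2 * s) / 2) := by
    intro x
    by_cases hx : x ∈ Metric.closedBall z₀ ((1 - r) / 4)
    · rw [Set.indicator_of_mem hx]
      have hxz : ‖x - z₀‖ ≤ (1 - r) / 4 := by
        rw [← dist_eq_norm]; exact Metric.mem_closedBall.mp hx
      have habs := abs_norm_sub_norm_le x z₀
      have habs' := abs_le.mp (le_trans habs hxz)
      have hxmem : ‖x‖ ∈ Set.Ioc r 1 := by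
        constructor
        · rw [hz₀n] at habs'; linarith [habs'.1]
        · rw [hz₀n] at habs'; linarith [habs'.2]
      have hd : ‖x - θ‖ ≤ 3 * (1 - r) / 4 := by
        calc ‖x - θ‖ ≤ ‖x - z₀‖ + ‖z₀ - θ‖ := by
              have := dist_triangle x z₀ θ
              simpa [dist_eq_norm] using this
          _ ≤ (1 - r) / 4 + (1 - r) / 2 := by rw [hz₀θ]; linarith
          _ = 3 * (1 - r) / 4 := by ring
      obtain ⟨hlo2, hup2, hB2⟩ := annulus_facts θ hθ hr0 hr1 hxmem
      rw [Set.indicator_of_mem hxmem, one_mul]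
      have hBle : 1 + r ^ 2 - 2 * r * (‖x‖⁻¹ * (inner ℝ θ x : ℝ)) ≤ (4 * (1 - r)) ^ 2 := by
        have h1 : (1 - r) + ‖x - θ‖ ≤ 7 * (1 - r) / 4 := by linarith
        have h2 : ((1 - r) + ‖x - θ‖) ^ 2 ≤ (7 * (1 - r) / 4) ^ 2 :=
          pow_le_pow_left₀ (by positivity) h1 2
        nlinarith [h2]
      calc (4 * (1 - r)) ^ (-((N : ℝ) + 2 * s))
          = ((4 * (1 - r)) ^ 2) ^ (-((N : ℝ) + 2 * s) / 2) := (sq_rpow (by positivity) _).symm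
        _ ≤ (1 + r ^ 2 - 2 * r * (‖x‖⁻¹ * (inner ℝ θ x : ℝ))) ^ (-((N : ℝ) + 2 * s) / 2) :=
            Real.rpow_le_rpow_of_nonpos (lt_of_lt_of_le (pow_pos hε0 2) hB2) hBle hexp
    · rw [Set.indicator_of_notMem hx]
      exact hf0 x
  have hIndInt : Integrable ((Metric.closedBall z₀ ((1 - r) / 4)).indicator
      (fun _ : EuclideanSpace ℝ (Fin N) => (4 * (1 - r)) ^ (-((N : ℝ) + 2 * s)))) :=
    (integrableOn_const measure_closedBall_lt_top.ne).integrable_indicator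
      measurableSet_closedBall
  have hlowA : (4 * (1 - r)) ^ (-((N : ℝ) + 2 * s)) * (((1 - r) / 4) ^ (N : ℕ) * vN)
      ≤ ∫ x : EuclideanSpace ℝ (Fin N),
        (Set.Ioc r 1).indicator (fun _ => (1 : ℝ)) ‖x‖ *
          (1 + r ^ 2 - 2 * r * (‖x‖⁻¹ * (inner ℝ θ x : ℝ))) ^ (-((N : ℝ) + 2 * s) / 2) := by
    have h1 := integral_mono hIndInt hfInt hptlow
    rw [integral_indicator measurableSet_closedBall, setIntegral_const, measureReal_def] at h1
    have h2 : (volume (Metric.closedBall z₀ ((1 - r) / 4))).toReal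
        = ((1 - r) / 4) ^ (N : ℕ) * vN := by
      rw [Measure.addHaar_closedBall volume z₀ (by positivity : (0:ℝ) ≤ (1 - r) / 4),
        finrank_euclideanSpace_fin, ENNReal.toReal_mul, ENNReal.toReal_ofReal (by positivity), hv]
    rw [h2, smul_eq_mul] at h1
    calc (4 * (1 - r)) ^ (-((N : ℝ) + 2 * s)) * (((1 - r) / 4) ^ (N : ℕ) * vN)
        = ((1 - r) / 4) ^ (N : ℕ) * vN * (4 * (1 - r)) ^ (-((N : ℝ) + 2 * s)) := by ring
      _ ≤ _ := h1
  -- polar decomposition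
  have hpol := polar_eq hN s θ hr0
  have hW := W_bounds hr0 hr1 (N - 1)
  have hsphI0 : 0 ≤ sphI N s θ r := sphI_nonneg θ hθ hr0.le
  constructor
  · -- lower bound for sphI
    have h3 : sphI N s θ r * (1 - r)
        ≥ (4 * (1 - r)) ^ (-((N : ℝ) + 2 * s)) * (((1 - r) / 4) ^ (N : ℕ) * vN) := by
      calc sphI N s θ r * (1 - r) ≥ sphI N s θ r * (∫ y in Set.Ioc r 1, y ^ (N - 1)) :=
            mul_le_mul_of_nonneg_left hW.2 hsphI0
        _ = _ := hpol.symm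
        _ ≥ _ := hlowA
    have e3 : (1 - r) ^ (-((N : ℝ) + 2 * s)) * (1 - r) ^ (N : ℕ) = (1 - r) ^ (-(2 * s)) := by
      rw [← Real.rpow_natCast (1 - r) N, ← Real.rpow_add hε0]
      congr 1
      ring
    have e1 : (1 - r) ^ (-(1 + 2 * s)) * (1 - r) = (1 - r) ^ (-(2 * s)) := by
      nth_rewrite 2 [show (1 - r) = (1 - r) ^ (1:ℝ) from (Real.rpow_one _).symm]
      rw [← Real.rpow_add hε0]
      congr 1
      ring
    have hkey : (4:ℝ) ^ (-((N : ℝ) + 2 * s)) * (4:ℝ)⁻¹ ^ (N : ℕ) * vN *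
        (1 - r) ^ (-(1 + 2 * s)) * (1 - r)
        = (4 * (1 - r)) ^ (-((N : ℝ) + 2 * s)) * (((1 - r) / 4) ^ (N : ℕ) * vN) := by
      calc (4:ℝ) ^ (-((N : ℝ) + 2 * s)) * (4:ℝ)⁻¹ ^ (N : ℕ) * vN *
          (1 - r) ^ (-(1 + 2 * s)) * (1 - r)
          = (4:ℝ) ^ (-((N : ℝ) + 2 * s)) * (4:ℝ)⁻¹ ^ (N : ℕ) * vN *
            ((1 - r) ^ (-(1 + 2 * s)) * (1 - r)) := by ring
        _ = (4:ℝ) ^ (-((N : ℝ) + 2 * s)) * (4:ℝ)⁻¹ ^ (N : ℕ) * vN *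
            ((1 - r) ^ (-((N : ℝ) + 2 * s)) * (1 - r) ^ (N : ℕ)) := by rw [e1, ← e3]
        _ = (4 * (1 - r)) ^ (-((N : ℝ) + 2 * s)) * (((1 - r) / 4) ^ (N : ℕ) * vN) := by
            rw [Real.mul_rpow (by norm_num) hε0.le, div_pow]
            field_simp
            ring_nf
            rw [← mul_pow]; norm_num
    have h5 : (4:ℝ) ^ (-((N : ℝ) + 2 * s)) * (4:ℝ)⁻¹ ^ (N : ℕ) * vN *
        (1 - r) ^ (-(1 + 2 * s)) * (1 - r) ≤ sphI N s θ r * (1 - r) := by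
      rw [hkey]; exact h3
    exact le_of_mul_le_mul_right h5 hε0
  · -- upper bound for sphI
    have e1 : (1 - r) ^ (-(1 + 2 * s)) * (1 - r) = (1 - r) ^ (-(2 * s)) := by
      nth_rewrite 2 [show (1 - r) = (1 - r) ^ (1:ℝ) from (Real.rpow_one _).symm]
      rw [← Real.rpow_add hε0]
      congr 1
      ring
    have hden : (0:ℝ) < Real.exp (-1) ^ (N - 1 : ℕ) * (1 - r) :=
      mul_pos (pow_pos (Real.exp_pos _) _) hε0
    have h4 : sphI N s θ r * (Real.exp (-1) ^ (N - 1 : ℕ) * (1 - r))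
        ≤ Cq * ((1 - r) ^ (-(2 * s)) * CN N s) := by
      calc sphI N s θ r * (Real.exp (-1) ^ (N - 1 : ℕ) * (1 - r))
          ≤ sphI N s θ r * (r ^ (N - 1 : ℕ) * (1 - r)) := by
            refine mul_le_mul_of_nonneg_left ?_ hsphI0
            exact mul_le_mul_of_nonneg_right
              (pow_le_pow_left₀ (Real.exp_pos _).le hre _) hε0.le
        _ ≤ sphI N s θ r * ∫ y in Set.Ioc r 1, y ^ (N - 1) :=
            mul_le_mul_of_nonneg_left hW.1 hsphI0
        _ = _ := hpol.symm
        _ ≤ Cq * ((1 - r) ^ (-(2 * s)) * CN N s) := hup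
    have h6 : sphI N s θ r
        ≤ (Cq * ((1 - r) ^ (-(2 * s)) * CN N s)) / (Real.exp (-1) ^ (N - 1 : ℕ) * (1 - r)) :=
      (le_div_iff₀ hden).mpr h4
    refine h6.trans ?_
    rw [div_le_iff₀ hden]
    have hpe : Real.exp 1 ^ (N - 1 : ℕ) * Real.exp (-1) ^ (N - 1 : ℕ) = 1 := by
      rw [← mul_pow, ← Real.exp_add]
      norm_num
    have hrw : (Cq * CN N s + 1) * Real.exp 1 ^ (N - 1 : ℕ) * (1 - r) ^ (-(1 + 2 * s)) *
        (Real.exp (-1) ^ (N - 1 : ℕ) * (1 - r))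
        = (Cq * CN N s + 1) * (1 - r) ^ (-(2 * s)) := by
      calc (Cq * CN N s + 1) * Real.exp 1 ^ (N - 1 : ℕ) * (1 - r) ^ (-(1 + 2 * s)) *
          (Real.exp (-1) ^ (N - 1 : ℕ) * (1 - r))
          = (Cq * CN N s + 1) * (Real.exp 1 ^ (N - 1 : ℕ) * Real.exp (-1) ^ (N - 1 : ℕ)) *
            ((1 - r) ^ (-(1 + 2 * s)) * (1 - r)) := by ring
        _ = (Cq * CN N s + 1) * (1 - r) ^ (-(2 * s)) := by rw [hpe, e1]; ring
    rw [hrw]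
    nlinarith [Real.rpow_nonneg hε0.le (-(2 * s))]


end HenonAux

/-- **Properties of the kernel** (Proposition 4.1): `K` is even and strictly positive,
behaves like `|t|^{-(1+2s)}` near the origin and like `e^{-|t|(N+2s)/2}` at infinity. -/
theorem henonKernel_even_pos_asymptotics
    (N : ℕ) (hN : 2 ≤ N) (s : ℝ) (hs0 : 0 < s) (hs1 : s < 1)
    (hNs : 2 * s < (N : ℝ))
    (θ : EuclideanSpace ℝ (Fin N)) (hθ : ‖θ‖ = 1) :
    (∀ t : ℝ, t ≠ 0 → henonKernel N s θ (-t) = henonKernel N s θ t) ∧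
    (∀ t : ℝ, t ≠ 0 → 0 < henonKernel N s θ t) ∧
    ∃ c₁ c₂ : ℝ, 0 < c₁ ∧ c₁ ≤ c₂ ∧
      (∀ t : ℝ, 0 < |t| → |t| ≤ 1 →
        c₁ * |t| ^ (-(1 + 2 * s)) ≤ henonKernel N s θ t ∧
        henonKernel N s θ t ≤ c₂ * |t| ^ (-(1 + 2 * s))) ∧
      (∀ t : ℝ, 1 ≤ |t| →
        c₁ * Real.exp (-|t| * ((N : ℝ) + 2 * s) / 2) ≤ henonKernel N s θ t ∧
        henonKernel N s θ t ≤ c₂ * Real.exp (-|t| * ((N : ℝ) + 2 * s) / 2)) := by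
  have hq0 : (0:ℝ) ≤ (N : ℝ) + 2 * s := by positivity
  have hM := HenonAux.M_pos (N := N) hN
  have hexp0 : -((N : ℝ) + 2 * s) / 2 ≤ 0 := by nlinarith
  -- evenness
  have heven : ∀ t : ℝ, henonKernel N s θ (-t) = henonKernel N s θ t := by
    intro t
    rw [HenonAux.kernel_eq, HenonAux.kernel_eq, neg_neg, HenonAux.sphI_neg θ hθ t,
      ← mul_assoc, ← Real.exp_add]
    congr 2
    ring
  have habs : ∀ t : ℝ, henonKernel N s θ t = henonKernel N s θ |t| := by
    intro t
    rcases le_or_gt 0 t with h | h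
    · rw [abs_of_nonneg h]
    · rw [abs_of_neg h]
      exact (heven t).symm
  -- positivity for positive t
  have hpos : ∀ t : ℝ, 0 < t → 0 < henonKernel N s θ t := by
    intro t ht
    rw [HenonAux.kernel_eq]
    have hr1 : Real.exp (-t) < 1 := Real.exp_lt_one_iff.mpr (by linarith)
    have hb := (HenonAux.sphI_bounds hN hs0 θ hθ (Real.exp_pos (-t)).le hr1).1
    have h1 : 0 < ((1 + Real.exp (-t)) ^ 2) ^ (-((N : ℝ) + 2 * s) / 2) * HenonAux.M N :=
      mul_pos (Real.rpow_pos_of_pos (by positivity) _) hM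
    exact mul_pos (Real.exp_pos _) (lt_of_lt_of_le h1 hb)
  have hpos' : ∀ t : ℝ, t ≠ 0 → 0 < henonKernel N s θ t := by
    intro t ht
    rcases lt_or_gt_of_ne ht with h | h
    · have h2 := hpos (-t) (by linarith)
      rwa [heven t] at h2
    · exact hpos t h
  refine ⟨fun t _ => heven t, hpos', ?_⟩
  obtain ⟨C₁, C₂, hC₁, hC₂, hnear⟩ := HenonAux.near_bounds hN hs0 hNs θ hθ
  have he1 : Real.exp (-1) < 1 := Real.exp_lt_one_iff.mpr (by norm_num)
  -- far-field bounds for positive t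
  have hfar : ∀ t : ℝ, 1 ≤ t →
      (4:ℝ) ^ (-((N : ℝ) + 2 * s) / 2) * HenonAux.M N * Real.exp (-t * ((N : ℝ) + 2 * s) / 2)
        ≤ henonKernel N s θ t ∧
      henonKernel N s θ t ≤ ((1 - Real.exp (-1)) ^ 2) ^ (-((N : ℝ) + 2 * s) / 2) * HenonAux.M N *
        Real.exp (-t * ((N : ℝ) + 2 * s) / 2) := by
    intro t ht
    have ht0 : 0 < t := by linarith
    have hr1 : Real.exp (-t) < 1 := Real.exp_lt_one_iff.mpr (by linarith)
    have hre : Real.exp (-t) ≤ Real.exp (-1) := Real.exp_le_exp.mpr (by linarith)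
    have hb := HenonAux.sphI_bounds hN hs0 θ hθ (Real.exp_pos (-t)).le hr1
    rw [HenonAux.kernel_eq]
    constructor
    · have h1 : (4:ℝ) ^ (-((N : ℝ) + 2 * s) / 2)
          ≤ ((1 + Real.exp (-t)) ^ 2) ^ (-((N : ℝ) + 2 * s) / 2) := by
        refine Real.rpow_le_rpow_of_nonpos (by positivity) ?_ hexp0
        nlinarith [Real.exp_pos (-t), hr1]
      calc (4:ℝ) ^ (-((N : ℝ) + 2 * s) / 2) * HenonAux.M N * Real.exp (-t * ((N : ℝ) + 2 * s) / 2)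
          ≤ ((1 + Real.exp (-t)) ^ 2) ^ (-((N : ℝ) + 2 * s) / 2) * HenonAux.M N *
            Real.exp (-t * ((N : ℝ) + 2 * s) / 2) := by
            refine mul_le_mul_of_nonneg_right (mul_le_mul_of_nonneg_right h1 hM.le)
              (Real.exp_pos _).le
        _ = Real.exp (-t * ((N : ℝ) + 2 * s) / 2) *
            (((1 + Real.exp (-t)) ^ 2) ^ (-((N : ℝ) + 2 * s) / 2) * HenonAux.M N) := by ring
        _ ≤ Real.exp (-t * ((N : ℝ) + 2 * s) / 2) * HenonAux.sphI N s θ (Real.exp (-t)) :=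
            mul_le_mul_of_nonneg_left hb.1 (Real.exp_pos _).le
    · have h1 : ((1 - Real.exp (-t)) ^ 2) ^ (-((N : ℝ) + 2 * s) / 2)
          ≤ ((1 - Real.exp (-1)) ^ 2) ^ (-((N : ℝ) + 2 * s) / 2) := by
        refine Real.rpow_le_rpow_of_nonpos (by nlinarith) ?_ hexp0
        nlinarith [Real.exp_pos (-t)]
      calc Real.exp (-t * ((N : ℝ) + 2 * s) / 2) * HenonAux.sphI N s θ (Real.exp (-t))
          ≤ Real.exp (-t * ((N : ℝ) + 2 * s) / 2) *
            (((1 - Real.exp (-t)) ^ 2) ^ (-((N : ℝ) + 2 * s) / 2) * HenonAux.M N) :=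
            mul_le_mul_of_nonneg_left hb.2 (Real.exp_pos _).le
        _ ≤ Real.exp (-t * ((N : ℝ) + 2 * s) / 2) *
            (((1 - Real.exp (-1)) ^ 2) ^ (-((N : ℝ) + 2 * s) / 2) * HenonAux.M N) :=
            mul_le_mul_of_nonneg_left (mul_le_mul_of_nonneg_right h1 hM.le) (Real.exp_pos _).le
        _ = ((1 - Real.exp (-1)) ^ 2) ^ (-((N : ℝ) + 2 * s) / 2) * HenonAux.M N *
            Real.exp (-t * ((N : ℝ) + 2 * s) / 2) := by ring
  -- near-field bounds for positive t
  have hnearK : ∀ t : ℝ, 0 < t → t ≤ 1 →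
      Real.exp (-((N : ℝ) + 2 * s) / 2) * C₁ * t ^ (-(1 + 2 * s)) ≤ henonKernel N s θ t ∧
      henonKernel N s θ t ≤
        C₂ * (1 - Real.exp (-1)) ^ (-(1 + 2 * s)) * t ^ (-(1 + 2 * s)) := by
    intro t ht0 ht1
    have hre : Real.exp (-1) ≤ Real.exp (-t) := Real.exp_le_exp.mpr (by linarith)
    have hr1 : Real.exp (-t) < 1 := Real.exp_lt_one_iff.mpr (by linarith)
    have hb := hnear (Real.exp (-t)) hre hr1
    have hε0 : 0 < 1 - Real.exp (-t) := by linarith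
    have hεt : 1 - Real.exp (-t) ≤ t := by
      have := Real.add_one_le_exp (-t)
      linarith
    have hεt2 : (1 - Real.exp (-1)) * t ≤ 1 - Real.exp (-t) := by
      have hconv := convexOn_exp.2 (Set.mem_univ (0:ℝ)) (Set.mem_univ (-1:ℝ))
        (by linarith : (0:ℝ) ≤ 1 - t) (by linarith : (0:ℝ) ≤ t) (by ring)
      simp only [smul_eq_mul, mul_zero, mul_neg, mul_one, zero_add, Real.exp_zero] at hconv
      have harg : Real.exp (-t) ≤ (1 - t) + t * Real.exp (-1) := by
        convert hconv using 2 <;> ring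
      nlinarith [Real.exp_pos (-1)]
    have he1' : 0 < 1 - Real.exp (-1) := by linarith
    have hexpneg : -(1 + 2 * s) ≤ 0 := by linarith
    have hεmono : (1 - Real.exp (-t)) ^ (-(1 + 2 * s)) ≥ t ^ (-(1 + 2 * s)) :=
      Real.rpow_le_rpow_of_nonpos hε0 hεt hexpneg
    rw [HenonAux.kernel_eq]
    constructor
    · calc Real.exp (-((N : ℝ) + 2 * s) / 2) * C₁ * t ^ (-(1 + 2 * s))
          = Real.exp (-((N : ℝ) + 2 * s) / 2) * (C₁ * t ^ (-(1 + 2 * s))) := by ring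
        _ ≤ Real.exp (-t * ((N : ℝ) + 2 * s) / 2) *
            (C₁ * (1 - Real.exp (-t)) ^ (-(1 + 2 * s))) := by
            refine mul_le_mul (Real.exp_le_exp.mpr (by nlinarith))
              (mul_le_mul_of_nonneg_left hεmono hC₁.le)
              (mul_nonneg hC₁.le (Real.rpow_nonneg ht0.le _)) (Real.exp_pos _).le
        _ ≤ Real.exp (-t * ((N : ℝ) + 2 * s) / 2) * HenonAux.sphI N s θ (Real.exp (-t)) :=
            mul_le_mul_of_nonneg_left hb.1 (Real.exp_pos _).le
    · have hmono2 : (1 - Real.exp (-t)) ^ (-(1 + 2 * s))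
          ≤ ((1 - Real.exp (-1)) * t) ^ (-(1 + 2 * s)) :=
        Real.rpow_le_rpow_of_nonpos (by positivity) hεt2 hexpneg
      have hsplit : ((1 - Real.exp (-1)) * t) ^ (-(1 + 2 * s))
          = (1 - Real.exp (-1)) ^ (-(1 + 2 * s)) * t ^ (-(1 + 2 * s)) :=
        Real.mul_rpow he1'.le ht0.le
      calc Real.exp (-t * ((N : ℝ) + 2 * s) / 2) * HenonAux.sphI N s θ (Real.exp (-t))
          ≤ 1 * (C₂ * (1 - Real.exp (-t)) ^ (-(1 + 2 * s))) := by
            refine mul_le_mul (Real.exp_le_one_iff.mpr (by nlinarith)) hb.2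
              (HenonAux.sphI_nonneg θ hθ (Real.exp_pos _).le) zero_le_one
        _ = C₂ * (1 - Real.exp (-t)) ^ (-(1 + 2 * s)) := by ring
        _ ≤ C₂ * ((1 - Real.exp (-1)) * t) ^ (-(1 + 2 * s)) :=
            mul_le_mul_of_nonneg_left hmono2 hC₂.le
        _ = C₂ * (1 - Real.exp (-1)) ^ (-(1 + 2 * s)) * t ^ (-(1 + 2 * s)) := by
            rw [hsplit]; ring
  -- assemble constants
  set c₁ : ℝ := min (Real.exp (-((N : ℝ) + 2 * s) / 2) * C₁)
    ((4:ℝ) ^ (-((N : ℝ) + 2 * s) / 2) * HenonAux.M N) with hc₁def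
  set c₂ : ℝ := max (C₂ * (1 - Real.exp (-1)) ^ (-(1 + 2 * s)))
    (((1 - Real.exp (-1)) ^ 2) ^ (-((N : ℝ) + 2 * s) / 2) * HenonAux.M N) with hc₂def
  have hc₁0 : 0 < c₁ :=
    lt_min (mul_pos (Real.exp_pos _) hC₁)
      (mul_pos (Real.rpow_pos_of_pos (by norm_num) _) hM)
  have hnearF : ∀ t : ℝ, 0 < |t| → |t| ≤ 1 →
      c₁ * |t| ^ (-(1 + 2 * s)) ≤ henonKernel N s θ t ∧
      henonKernel N s θ t ≤ c₂ * |t| ^ (-(1 + 2 * s)) := by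
    intro t h0 h1
    rw [habs t]
    have hK := hnearK |t| h0 h1
    have hrn : (0:ℝ) ≤ |t| ^ (-(1 + 2 * s)) := Real.rpow_nonneg (abs_nonneg t) _
    exact ⟨le_trans (mul_le_mul_of_nonneg_right (min_le_left _ _) hrn) hK.1,
      le_trans hK.2 (mul_le_mul_of_nonneg_right (le_max_left _ _) hrn)⟩
  have hfarF : ∀ t : ℝ, 1 ≤ |t| →
      c₁ * Real.exp (-|t| * ((N : ℝ) + 2 * s) / 2) ≤ henonKernel N s θ t ∧
      henonKernel N s θ t ≤ c₂ * Real.exp (-|t| * ((N : ℝ) + 2 * s) / 2) := by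
    intro t h1
    rw [habs t]
    have hK := hfar |t| h1
    have hrn : (0:ℝ) ≤ Real.exp (-|t| * ((N : ℝ) + 2 * s) / 2) := (Real.exp_pos _).le
    exact ⟨le_trans (mul_le_mul_of_nonneg_right (min_le_right _ _) hrn) hK.1,
      le_trans hK.2 (mul_le_mul_of_nonneg_right (le_max_right _ _) hrn)⟩
  have hc₁₂ : c₁ ≤ c₂ := by
    have h := hfarF 1 (by norm_num)
    have hE : (0:ℝ) < Real.exp (-|(1:ℝ)| * ((N : ℝ) + 2 * s) / 2) := Real.exp_pos _
    exact le_of_mul_le_mul_right (le_trans h.1 h.2) hE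
  exact ⟨c₁, c₂, hc₁0, hc₁₂, hnearF, hfarF⟩
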